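/- Let T > 0, let λ : [0,T] → ℝ be continuously differentiable with λ(0) = 0, and set Λ(t) := ∫₀ᵗ λ(s) ds. Let f, g : ℝ → ℝ be twice continuously differentiable. Define u(t,x) := f(x·e^{−Λ(t)}) + ∫₀ᵗ g(x·e^{2Λ(s)−Λ(t)}) ds. Then for all (t,x) ∈ [0,T] × ℝ one has ∂²ₜu(t,x) + λ'(t)·x·∂ₓu(t,x) − λ(t)²·x·∂ₓu(t,x) − λ(t)²·x²·∂²ₓu(t,x) = 0, and moreover u(0,x) = f(x) and ∂ₜu(0,x) = g(x). -/

import Mathlib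

open MeasureTheory intervalIntegral Real Asymptotics Filter

/-- `Λ(t) = ∫₀ᵗ λ(s) ds`. -/
noncomputable def Lam (lam : ℝ → ℝ) (t : ℝ) : ℝ := ∫ s in (0:ℝ)..t, lam s

/-- The explicit solution `u(t,x) = f(x·e^{−Λ(t)}) + ∫₀ᵗ g(x·e^{2Λ(s)−Λ(t)}) ds`
of Example 2.9 of the paper. -/
noncomputable def usol (lam f g : ℝ → ℝ) (t x : ℝ) : ℝ :=
  f (x * Real.exp (-(Lam lam t))) +
    ∫ s in (0:ℝ)..t, g (x * Real.exp (2 * Lam lam s - Lam lam t))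

lemma param_primitive_hasFDerivAt {F F' : ℝ → ℝ → ℝ}
    (hF : Continuous fun p : ℝ × ℝ => F p.1 p.2)
    (hF' : Continuous fun p : ℝ × ℝ => F' p.1 p.2)
    (hd : ∀ s y, HasDerivAt (fun z => F s z) (F' s y) y)
    (t₀ y₀ : ℝ) :
    HasFDerivAt (fun p : ℝ × ℝ => ∫ s in (0:ℝ)..p.1, F s p.2)
      ((F t₀ y₀) • (ContinuousLinearMap.fst ℝ ℝ ℝ)
        + (∫ s in (0:ℝ)..t₀, F' s y₀) • (ContinuousLinearMap.snd ℝ ℝ ℝ)) (t₀, y₀) := by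
  have hFy : ∀ y : ℝ, Continuous fun s => F s y := fun y =>
    hF.comp (continuous_id.prodMk continuous_const)
  have hF'y : ∀ y : ℝ, Continuous fun s => F' s y := fun y =>
    hF'.comp (continuous_id.prodMk continuous_const)
  have hF'x : ∀ s : ℝ, Continuous fun z => F' s z := fun s =>
    hF'.comp (continuous_const.prodMk continuous_id)
  have hint : ∀ (y a b : ℝ), IntervalIntegrable (fun s => F s y) volume a b :=
    fun y a b => (hFy y).intervalIntegrable a b
  have hint' : ∀ (y a b : ℝ), IntervalIntegrable (fun s => F' s y) volume a b :=
    fun y a b => (hF'y y).intervalIntegrable a b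
  set a := F t₀ y₀ with ha
  set b := ∫ s in (0:ℝ)..t₀, F' s y₀ with hb
  have key : ∀ p : ℝ × ℝ,
      (∫ s in (0:ℝ)..p.1, F s p.2) - (∫ s in (0:ℝ)..t₀, F s y₀)
        - (a * (p.1 - t₀) + b * (p.2 - y₀))
      = ((∫ s in t₀..p.1, F s p.2) - a * (p.1 - t₀))
        + (∫ s in (0:ℝ)..t₀, (F s p.2 - F s y₀ - F' s y₀ * (p.2 - y₀))) := by
    intro p
    have h1 : (∫ s in (0:ℝ)..t₀, F s p.2) + (∫ s in t₀..p.1, F s p.2)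
        = ∫ s in (0:ℝ)..p.1, F s p.2 :=
      integral_add_adjacent_intervals (hint p.2 0 t₀) (hint p.2 t₀ p.1)
    have h2 : (∫ s in (0:ℝ)..t₀, (F s p.2 - F s y₀ - F' s y₀ * (p.2 - y₀)))
        = (∫ s in (0:ℝ)..t₀, F s p.2) - (∫ s in (0:ℝ)..t₀, F s y₀)
          - b * (p.2 - y₀) := by
      rw [integral_sub ((hint p.2 0 t₀).sub (hint y₀ 0 t₀)) ((hint' y₀ 0 t₀).mul_const _),
        integral_sub (hint p.2 0 t₀) (hint y₀ 0 t₀), intervalIntegral.integral_mul_const]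
    rw [h2, ← h1]; ring
  have e1 : (fun p : ℝ × ℝ => (∫ s in t₀..p.1, F s p.2) - a * (p.1 - t₀))
      =o[nhds (t₀, y₀)] fun p => p - (t₀, y₀) := by
    rw [isLittleO_iff]
    intro ε hε
    obtain ⟨δ, hδ, hδF⟩ := Metric.continuousAt_iff.1 hF.continuousAt ε hε
    filter_upwards [Metric.ball_mem_nhds (t₀, y₀) hδ] with p hp
    rw [Metric.mem_ball] at hp
    have hp1 : |p.1 - t₀| < δ := lt_of_le_of_lt
      (by rw [← Real.dist_eq, Prod.dist_eq]; exact le_max_left _ _) hp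
    have hp2 : |p.2 - y₀| < δ := lt_of_le_of_lt
      (by rw [← Real.dist_eq, Prod.dist_eq]; exact le_max_right _ _) hp
    have hbnd : ∀ s ∈ Set.uIoc t₀ p.1, ‖F s p.2 - a‖ ≤ ε := by
      intro s hs
      have hs' : |s - t₀| ≤ |p.1 - t₀| := Set.abs_sub_left_of_mem_uIcc (Set.uIoc_subset_uIcc hs)
      have hdist : dist (s, p.2) (t₀, y₀) < δ := by
        rw [Prod.dist_eq]
        exact max_lt (by rw [Real.dist_eq]; exact hs'.trans_lt hp1)
          (by rw [Real.dist_eq]; exact hp2)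
      have := hδF hdist
      rw [Real.dist_eq] at this
      exact le_of_lt (by simpa [Real.norm_eq_abs] using this)
    have h0 : (∫ s in t₀..p.1, F s p.2) - a * (p.1 - t₀)
        = ∫ s in t₀..p.1, (F s p.2 - a) := by
      rw [integral_sub (hint p.2 t₀ p.1) intervalIntegrable_const, intervalIntegral.integral_const,
        smul_eq_mul]
      ring
    rw [h0]
    calc ‖∫ s in t₀..p.1, (F s p.2 - a)‖ ≤ ε * |p.1 - t₀| :=
          intervalIntegral.norm_integral_le_of_norm_le_const hbnd
      _ ≤ ε * ‖p - (t₀, y₀)‖ := by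
          apply mul_le_mul_of_nonneg_left _ (le_of_lt hε)
          have : p.1 - t₀ = (p - (t₀, y₀)).1 := rfl
          rw [← Real.norm_eq_abs, this]
          exact norm_fst_le _
  have e2 : (fun p : ℝ × ℝ => ∫ s in (0:ℝ)..t₀, (F s p.2 - F s y₀ - F' s y₀ * (p.2 - y₀)))
      =o[nhds (t₀, y₀)] fun p => p - (t₀, y₀) := by
    rw [isLittleO_iff]
    intro ε hε
    set K := Set.uIcc (0:ℝ) t₀ ×ˢ Metric.closedBall y₀ 1 with hK
    have hKc : IsCompact K := isCompact_uIcc.prod (isCompact_closedBall _ _)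
    have hεc : 0 < ε / (|t₀| + 1) := by positivity
    obtain ⟨δ, hδ, hδF⟩ := Metric.uniformContinuousOn_iff.1
      (hKc.uniformContinuousOn_of_continuous hF'.continuousOn) (ε / (|t₀| + 1)) hεc
    filter_upwards [Metric.ball_mem_nhds (t₀, y₀) (lt_min hδ one_pos)] with p hp
    rw [Metric.mem_ball] at hp
    have hp2 : |p.2 - y₀| < min δ 1 := lt_of_le_of_lt
      (by rw [← Real.dist_eq, Prod.dist_eq]; exact le_max_right _ _) hp
    have hbnd : ∀ s ∈ Set.uIoc (0:ℝ) t₀,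
        ‖F s p.2 - F s y₀ - F' s y₀ * (p.2 - y₀)‖ ≤ (ε / (|t₀| + 1)) * |p.2 - y₀| := by
      intro s hs
      have hsK : s ∈ Set.uIcc (0:ℝ) t₀ := Set.uIoc_subset_uIcc hs
      have hFTC : (∫ z in y₀..p.2, F' s z) = F s p.2 - F s y₀ :=
        integral_eq_sub_of_hasDerivAt (fun z _ => hd s z)
          ((hF'x s).intervalIntegrable _ _)
      have hrw : F s p.2 - F s y₀ - F' s y₀ * (p.2 - y₀)
          = ∫ z in y₀..p.2, (F' s z - F' s y₀) := by
        rw [integral_sub ((hF'x s).intervalIntegrable _ _) intervalIntegrable_const,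
          hFTC, intervalIntegral.integral_const, smul_eq_mul]
        ring
      rw [hrw]
      apply intervalIntegral.norm_integral_le_of_norm_le_const
      intro z hz
      have hz' : |z - y₀| ≤ |p.2 - y₀| := Set.abs_sub_left_of_mem_uIcc (Set.uIoc_subset_uIcc hz)
      have hz1 : z ∈ Metric.closedBall y₀ 1 := by
        rw [Metric.mem_closedBall, Real.dist_eq]
        exact hz'.trans (le_of_lt (hp2.trans_le (min_le_right _ _)))
      have hy1 : y₀ ∈ Metric.closedBall y₀ (1:ℝ) := Metric.mem_closedBall_self one_pos.le
      have hdd : dist ((s, z) : ℝ × ℝ) (s, y₀) < δ := by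
        rw [Prod.dist_eq]
        apply max_lt (by simpa using hδ)
        rw [Real.dist_eq]
        exact hz'.trans_lt (hp2.trans_le (min_le_left _ _))
      have := hδF (s, z) ⟨hsK, hz1⟩ (s, y₀) ⟨hsK, hy1⟩ hdd
      rw [Real.dist_eq] at this
      exact le_of_lt (by simpa [Real.norm_eq_abs] using this)
    calc ‖∫ s in (0:ℝ)..t₀, (F s p.2 - F s y₀ - F' s y₀ * (p.2 - y₀))‖
        ≤ (ε / (|t₀| + 1)) * |p.2 - y₀| * |t₀ - 0| :=
          intervalIntegral.norm_integral_le_of_norm_le_const hbnd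
      _ ≤ ε * |p.2 - y₀| := by
          rw [sub_zero]
          rw [div_mul_eq_mul_div, div_mul_eq_mul_div, div_le_iff₀ (by positivity)]
          nlinarith [abs_nonneg (p.2 - y₀), abs_nonneg t₀]
      _ ≤ ε * ‖p - (t₀, y₀)‖ := by
          apply mul_le_mul_of_nonneg_left _ (le_of_lt hε)
          have : p.2 - y₀ = (p - (t₀, y₀)).2 := rfl
          rw [← Real.norm_eq_abs, this]
          exact norm_snd_le _
  rw [hasFDerivAt_iff_isLittleO]
  refine (e1.add e2).congr' (Eventually.of_forall fun p => ?_) EventuallyEq.rfl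
  simp only [ContinuousLinearMap.add_apply, ContinuousLinearMap.coe_smul',
    Pi.smul_apply, ContinuousLinearMap.coe_fst', ContinuousLinearMap.coe_snd',
    smul_eq_mul, Prod.fst_sub, Prod.snd_sub]
  exact (key p).symm

/-- Auxiliary parametric integral `W_{h,m}(t,y) = ∫₀ᵗ e^{mΛ(s)} h(y e^{2Λ(s)}) ds`. -/
noncomputable def Wint (lam h : ℝ → ℝ) (m t y : ℝ) : ℝ :=
  ∫ s in (0:ℝ)..t, Real.exp (m * Lam lam s) * h (y * Real.exp (2 * Lam lam s))

lemma Lam_hasDerivAt {lam : ℝ → ℝ} (hc : Continuous lam) (t : ℝ) :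
    HasDerivAt (Lam lam) (lam t) t :=
  (hc.integral_hasStrictDerivAt 0 t).hasDerivAt

lemma Wint_hasFDerivAt {lam h h' : ℝ → ℝ} (hΛc : Continuous (Lam lam))
    (hh : Continuous h) (hh' : Continuous h')
    (hder : ∀ x, HasDerivAt h (h' x) x) (m t y : ℝ) :
    HasFDerivAt (fun p : ℝ × ℝ => Wint lam h m p.1 p.2)
      ((Real.exp (m * Lam lam t) * h (y * Real.exp (2 * Lam lam t))) •
          ContinuousLinearMap.fst ℝ ℝ ℝ
        + (Wint lam h' (m + 2) t y) • ContinuousLinearMap.snd ℝ ℝ ℝ) (t, y) := by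
  have hc1 : Continuous fun p : ℝ × ℝ =>
      Real.exp (m * Lam lam p.1) * h (p.2 * Real.exp (2 * Lam lam p.1)) := by
    apply Continuous.mul
    · exact Real.continuous_exp.comp (continuous_const.mul (hΛc.comp continuous_fst))
    · exact hh.comp (continuous_snd.mul
        (Real.continuous_exp.comp (continuous_const.mul (hΛc.comp continuous_fst))))
  have hc2 : Continuous fun p : ℝ × ℝ =>
      Real.exp ((m + 2) * Lam lam p.1) * h' (p.2 * Real.exp (2 * Lam lam p.1)) := by
    apply Continuous.mul
    · exact Real.continuous_exp.comp (continuous_const.mul (hΛc.comp continuous_fst))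
    · exact hh'.comp (continuous_snd.mul
        (Real.continuous_exp.comp (continuous_const.mul (hΛc.comp continuous_fst))))
  have hd : ∀ s z : ℝ,
      HasDerivAt (fun z : ℝ => Real.exp (m * Lam lam s) * h (z * Real.exp (2 * Lam lam s)))
        (Real.exp ((m + 2) * Lam lam s) * h' (z * Real.exp (2 * Lam lam s))) z := by
    intro s z
    have h1 : HasDerivAt (fun z : ℝ => z * Real.exp (2 * Lam lam s))
        (Real.exp (2 * Lam lam s)) z := hasDerivAt_mul_const _
    have h2 := ((hder (z * Real.exp (2 * Lam lam s))).comp z h1).const_mul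
      (Real.exp (m * Lam lam s))
    refine h2.congr_deriv ?_
    rw [show (m + 2) * Lam lam s = m * Lam lam s + 2 * Lam lam s by ring, Real.exp_add]
    ring
  exact param_primitive_hasFDerivAt hc1 hc2 hd t y

/-- `∂ₓ u`. -/
noncomputable def Xf (lam f g : ℝ → ℝ) (t x : ℝ) : ℝ :=
  (deriv f (x * Real.exp (-(Lam lam t)))
    + Wint lam (deriv g) 2 t (x * Real.exp (-(Lam lam t)))) * Real.exp (-(Lam lam t))

/-- `∂ₓ² u`. -/
noncomputable def Yf (lam f g : ℝ → ℝ) (t x : ℝ) : ℝ :=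
  (deriv (deriv f) (x * Real.exp (-(Lam lam t)))
    + Wint lam (deriv (deriv g)) 4 t (x * Real.exp (-(Lam lam t))))
    * (Real.exp (-(Lam lam t)) * Real.exp (-(Lam lam t)))

/-- `∂ₜ u`. -/
noncomputable def Tf (lam f g : ℝ → ℝ) (t x : ℝ) : ℝ :=
  g (x * Real.exp (Lam lam t)) - lam t * x * Xf lam f g t x

theorem explicit_solution_model_problem
    (T : ℝ) (hT : 0 < T) (lam : ℝ → ℝ) (hlam : ContDiff ℝ 1 lam) (hlam0 : lam 0 = 0)
    (f g : ℝ → ℝ) (hf : ContDiff ℝ 2 f) (hg : ContDiff ℝ 2 g) :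
    ∀ t ∈ Set.Icc (0:ℝ) T, ∀ x : ℝ,
      (deriv (deriv (fun τ => usol lam f g τ x)) t
          + deriv lam t * x * deriv (fun y => usol lam f g t y) x
          - lam t ^ 2 * x * deriv (fun y => usol lam f g t y) x
          - lam t ^ 2 * x ^ 2 * deriv (deriv (fun y => usol lam f g t y)) x = 0)
      ∧ usol lam f g 0 x = f x
      ∧ deriv (fun τ => usol lam f g τ x) 0 = g x := by
  have hlamc : Continuous lam := hlam.continuous
  have hΛd : ∀ t, HasDerivAt (Lam lam) (lam t) t := Lam_hasDerivAt hlamc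
  have hΛdiff : Differentiable ℝ (Lam lam) := fun t => (hΛd t).differentiableAt
  have hΛc : Continuous (Lam lam) := hΛdiff.continuous
  -- derivative packs for f and g
  have hf2 : ContDiff ℝ ((1:ℕ) + 1) f := by exact_mod_cast hf
  have hg2 : ContDiff ℝ ((1:ℕ) + 1) g := by exact_mod_cast hg
  have hf1 : ContDiff ℝ 1 (deriv f) := (contDiff_succ_iff_deriv.mp hf2).2.2
  have hg1 : ContDiff ℝ 1 (deriv g) := (contDiff_succ_iff_deriv.mp hg2).2.2
  have hfd : ∀ x, HasDerivAt f (deriv f x) x :=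
    fun x => ((hf.differentiable (by norm_num)) x).hasDerivAt
  have hgd : ∀ x, HasDerivAt g (deriv g x) x :=
    fun x => ((hg.differentiable (by norm_num)) x).hasDerivAt
  have hfd2 : ∀ x, HasDerivAt (deriv f) (deriv (deriv f) x) x :=
    fun x => ((hf1.differentiable one_ne_zero) x).hasDerivAt
  have hgd2 : ∀ x, HasDerivAt (deriv g) (deriv (deriv g) x) x :=
    fun x => ((hg1.differentiable one_ne_zero) x).hasDerivAt
  have hgc : Continuous g := hg.continuous
  have hg'c : Continuous (deriv g) := hg1.continuous
  have hg''c : Continuous (deriv (deriv g)) := hg1.continuous_deriv le_rfl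
  have hlamd : ∀ t, HasDerivAt lam (deriv lam t) t :=
    fun t => ((hlam.differentiable one_ne_zero) t).hasDerivAt
  -- the two joint derivative facts for the parametric integrals
  have HW0 := fun t y => Wint_hasFDerivAt (lam := lam) hΛc hgc hg'c hgd 0 t y
  have HW2 := fun t y => Wint_hasFDerivAt (lam := lam) hΛc hg'c hg''c hgd2 2 t y
  norm_num at HW0 HW2
  -- rewriting `usol` via `Wint`
  have husol : ∀ t x, usol lam f g t x
      = f (x * Real.exp (-(Lam lam t))) + Wint lam g 0 t (x * Real.exp (-(Lam lam t))) := by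
    intro t x
    unfold usol Wint
    congr 1
    refine intervalIntegral.integral_congr fun s _ => ?_
    rw [zero_mul, Real.exp_zero, one_mul, mul_assoc, ← Real.exp_add]
    congr 2
    ring
  -- exp algebra
  have hArg : ∀ t (x : ℝ), x * Real.exp (-(Lam lam t)) * Real.exp (2 * Lam lam t)
      = x * Real.exp (Lam lam t) := by
    intro t x
    rw [mul_assoc, ← Real.exp_add]
    congr 2
    ring
  have hPE : ∀ t, Real.exp (2 * Lam lam t) * Real.exp (-(Lam lam t)) = Real.exp (Lam lam t) := by
    intro t
    rw [← Real.exp_add]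
    congr 1
    ring
  -- basic curve derivatives
  have hE : ∀ t, HasDerivAt (fun τ => Real.exp (-(Lam lam τ)))
      (-(lam t) * Real.exp (-(Lam lam t))) t := by
    intro t
    have := ((hΛd t).neg).exp
    simp only [Pi.neg_apply] at this
    convert this using 1
    ring
  have hxE : ∀ t (x : ℝ), HasDerivAt (fun τ => x * Real.exp (-(Lam lam τ)))
      (x * (-(lam t) * Real.exp (-(Lam lam t)))) t := fun t x => (hE t).const_mul x
  have hcurve : ∀ t (x : ℝ),
      HasDerivAt (fun τ => ((τ, x * Real.exp (-(Lam lam τ))) : ℝ × ℝ))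
        ((1 : ℝ), x * (-(lam t) * Real.exp (-(Lam lam t)))) t :=
    fun t x => (hasDerivAt_id t).prodMk (hxE t x)
  have hline : ∀ (t x : ℝ), HasDerivAt
      (fun y => ((t, y * Real.exp (-(Lam lam t))) : ℝ × ℝ))
      ((0 : ℝ), Real.exp (-(Lam lam t))) x :=
    fun t x => (hasDerivAt_const x t).prodMk (hasDerivAt_mul_const _)
  -- first spatial derivative
  have HX : ∀ t x, HasDerivAt (fun y => usol lam f g t y) (Xf lam f g t x) x := by
    intro t x
    rw [show (fun y => usol lam f g t y) = fun y =>
      f (y * Real.exp (-(Lam lam t))) + Wint lam g 0 t (y * Real.exp (-(Lam lam t)))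
      from funext fun y => husol t y]
    have h1 : HasDerivAt (fun y => f (y * Real.exp (-(Lam lam t))))
        (deriv f (x * Real.exp (-(Lam lam t))) * Real.exp (-(Lam lam t))) x :=
      (hfd _).comp x (hasDerivAt_mul_const _)
    have h2 := (HW0 t (x * Real.exp (-(Lam lam t)))).comp_hasDerivAt x (hline t x)
    have h3 := h1.add h2
    refine h3.congr_deriv (Eq.symm ?_)
    unfold Xf
    simp
    ring
  -- second spatial derivative
  have HXX : ∀ t x, HasDerivAt (fun y => Xf lam f g t y) (Yf lam f g t x) x := by
    intro t x
    unfold Xf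
    have h1 : HasDerivAt (fun y => deriv f (y * Real.exp (-(Lam lam t))))
        (deriv (deriv f) (x * Real.exp (-(Lam lam t))) * Real.exp (-(Lam lam t))) x :=
      (hfd2 _).comp x (hasDerivAt_mul_const _)
    have h2 := (HW2 t (x * Real.exp (-(Lam lam t)))).comp_hasDerivAt x (hline t x)
    have h3 := (h1.add h2).mul_const (Real.exp (-(Lam lam t)))
    refine h3.congr_deriv (Eq.symm ?_)
    unfold Yf
    simp
    ring
  -- time derivative
  have HT : ∀ t x, HasDerivAt (fun τ => usol lam f g τ x) (Tf lam f g t x) t := by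
    intro t x
    rw [show (fun τ => usol lam f g τ x) = fun τ =>
      f (x * Real.exp (-(Lam lam τ))) + Wint lam g 0 τ (x * Real.exp (-(Lam lam τ)))
      from funext fun τ => husol τ x]
    have h1 : HasDerivAt (fun τ => f (x * Real.exp (-(Lam lam τ))))
        (deriv f (x * Real.exp (-(Lam lam t)))
          * (x * (-(lam t) * Real.exp (-(Lam lam t))))) t :=
      (hfd _).comp t (hxE t x)
    have h2 := (HW0 t (x * Real.exp (-(Lam lam t)))).comp_hasDerivAt t (hcurve t x)
    have h3 := h1.add h2
    refine h3.congr_deriv (Eq.symm ?_)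
    unfold Tf Xf
    simp [hArg t x]
    ring
  -- time derivative of `Xf`
  have HXt : ∀ t x, HasDerivAt (fun τ => Xf lam f g τ x)
      (-(lam t) * Xf lam f g t x - lam t * x * Yf lam f g t x
        + Real.exp (Lam lam t) * deriv g (x * Real.exp (Lam lam t))) t := by
    intro t x
    unfold Xf
    have h1 : HasDerivAt (fun τ => deriv f (x * Real.exp (-(Lam lam τ))))
        (deriv (deriv f) (x * Real.exp (-(Lam lam t)))
          * (x * (-(lam t) * Real.exp (-(Lam lam t))))) t :=
      (hfd2 _).comp t (hxE t x)
    have h2 := (HW2 t (x * Real.exp (-(Lam lam t)))).comp_hasDerivAt t (hcurve t x)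
    have h3 := (h1.add h2).mul (hE t)
    refine h3.congr_deriv (Eq.symm ?_)
    simp only [Yf, Function.comp]
    simp [hArg t x]
    linear_combination (-(deriv g (x * Real.exp (Lam lam t)))) * hPE t
  -- second time derivative
  have HTT : ∀ t x, HasDerivAt (fun τ => Tf lam f g τ x)
      (deriv g (x * Real.exp (Lam lam t)) * (x * (Real.exp (Lam lam t) * lam t))
        - (deriv lam t * x * Xf lam f g t x
          + lam t * x * (-(lam t) * Xf lam f g t x - lam t * x * Yf lam f g t x
            + Real.exp (Lam lam t) * deriv g (x * Real.exp (Lam lam t))))) t := by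
    intro t x
    have h1 : HasDerivAt (fun τ => g (x * Real.exp (Lam lam τ)))
        (deriv g (x * Real.exp (Lam lam t)) * (x * (Real.exp (Lam lam t) * lam t))) t :=
      (hgd _).comp t (((hΛd t).exp).const_mul x)
    have h2 := ((hlamd t).mul_const x).mul (HXt t x)
    have h3 := h1.sub h2
    have hfun : (fun τ => Tf lam f g τ x)
        = fun τ => g (x * Real.exp (Lam lam τ)) - lam τ * x * Xf lam f g τ x :=
      funext fun τ => rfl
    rw [hfun]
    exact h3
  -- conclusion
  intro t ht x
  refine ⟨?_, ?_, ?_⟩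
  · have hdt : deriv (fun τ => usol lam f g τ x) = fun τ => Tf lam f g τ x :=
      funext fun τ => (HT τ x).deriv
    have hdx : deriv (fun y => usol lam f g t y) x = Xf lam f g t x := (HX t x).deriv
    have hdx2 : deriv (fun y => usol lam f g t y) = fun y => Xf lam f g t y :=
      funext fun y => (HX t y).deriv
    rw [hdt, (HTT t x).deriv, hdx, hdx2, (HXX t x).deriv]
    ring
  · have h0 : Lam lam 0 = 0 := intervalIntegral.integral_same
    simp [usol, h0]
  · have h0 : Lam lam 0 = 0 := intervalIntegral.integral_same
    rw [(HT 0 x).deriv]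
    unfold Tf
    simp [hlam0, h0]
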